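/- For every real x, the shifted Euler polynomial matrix factorizes through the Vandermonde matrix as 𝓔̃(x) = 𝓔·V(x). -/

import Mathlib

noncomputable section

/-- `Eu x k` is the Euler polynomial `E_k(x)`, characterized by the generating function
`(2/(e^z+1)) e^{xz} = Σ_k E_k(x) z^k / k!` for `|z| < π`. -/
def IsEulerFamily (Eu : ℝ → ℕ → ℝ) : Prop :=
  ∀ x z : ℝ, |z| < Real.pi →
    HasSum (fun k : ℕ => Eu x k * z ^ k / (Nat.factorial k : ℝ))
      (2 / (Real.exp z + 1) * Real.exp (x * z))

/-- The `(n+1)×(n+1)` Euler polynomial matrix `𝓔(x)`, with `(i,j)` entry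
`C(i,j) E_{i-j}(x)` (which is `0` for `j > i` since then `C(i,j) = 0`). -/
def eulerMatrix (Eu : ℝ → ℕ → ℝ) (n : ℕ) (x : ℝ) :
    Matrix (Fin (n + 1)) (Fin (n + 1)) ℝ :=
  Matrix.of fun i j => (Nat.choose (i : ℕ) (j : ℕ) : ℝ) * Eu x ((i : ℕ) - (j : ℕ))

/-- The shifted Euler polynomial matrix `𝓔̃(x)`, with `(i,j)` entry `E_i(j + x)`. -/
def shiftedEulerMatrix (Eu : ℝ → ℕ → ℝ) (n : ℕ) (x : ℝ) :
    Matrix (Fin (n + 1)) (Fin (n + 1)) ℝ :=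
  Matrix.of fun i j => Eu ((j : ℕ) + x) (i : ℕ)

/-- The `(n+1)×(n+1)` Vandermonde matrix `V(x)`, with `(i,j)` entry `(j + x)^i`. -/
def vandermondeMatrix (n : ℕ) (x : ℝ) : Matrix (Fin (n + 1)) (Fin (n + 1)) ℝ :=
  Matrix.of fun i j => ((j : ℕ) + x) ^ (i : ℕ)

open Finset

private lemma exp_hasSum' (y : ℝ) :
    HasSum (fun k : ℕ => y ^ k / (Nat.factorial k : ℝ)) (Real.exp y) := by
  rw [Real.exp_eq_exp_ℝ]
  exact NormedSpace.expSeries_div_hasSum_exp y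

private lemma hasFPowerSeries_of_hasSum' {F : ℝ → ℝ} {c : ℕ → ℝ} {r : ℝ} (hr : 0 < r)
    (hc : ∀ z : ℝ, |z| < r → HasSum (fun n => c n * z ^ n) (F z)) :
    HasFPowerSeriesOnBall F (FormalMultilinearSeries.ofScalars ℝ c) 0 (ENNReal.ofReal r) := by
  refine ⟨?_, ENNReal.ofReal_pos.2 hr, ?_⟩
  · refine ENNReal.le_of_forall_nnreal_lt fun s hs => ?_
    have hs' : (s : ℝ) < r := by
      rw [← ENNReal.ofReal_coe_nnreal] at hs
      exact (ENNReal.ofReal_lt_ofReal_iff hr).1 hs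
    apply FormalMultilinearSeries.le_radius_of_summable
    have hsum : Summable fun n => |c n * (s : ℝ) ^ n| := by
      rw [summable_abs_iff]
      exact (hc s (by rwa [abs_of_nonneg s.coe_nonneg])).summable
    refine hsum.of_nonneg_of_le (fun n => by positivity) fun n => ?_
    rw [FormalMultilinearSeries.ofScalars_norm, Real.norm_eq_abs, abs_mul, abs_pow,
      abs_of_nonneg s.coe_nonneg]
  · intro y hy
    have hy' : |y| < r := by
      rw [EMetric.mem_ball, edist_dist, Real.dist_eq, sub_zero,
        ENNReal.ofReal_lt_ofReal_iff hr] at hy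
      exact hy
    have h := hc y hy'
    have hcoeff : ∀ n, (FormalMultilinearSeries.ofScalars ℝ c).coeff n = c n := by
      intro n
      rw [FormalMultilinearSeries.coeff]
      show (FormalMultilinearSeries.ofScalars ℝ c n) (fun _ => 1) = c n
      rw [FormalMultilinearSeries.ofScalars_apply_eq]
      simp
    simpa [FormalMultilinearSeries.ofScalars_apply_eq, smul_eq_mul, hcoeff, mul_comm] using h

private lemma coeff_unique' {F : ℝ → ℝ} {c d : ℕ → ℝ} {r : ℝ} (hr : 0 < r)
    (hc : ∀ z : ℝ, |z| < r → HasSum (fun n => c n * z ^ n) (F z))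
    (hd : ∀ z : ℝ, |z| < r → HasSum (fun n => d n * z ^ n) (F z)) : c = d := by
  have h1 := (hasFPowerSeries_of_hasSum' hr hc).hasFPowerSeriesAt
  have h2 := (hasFPowerSeries_of_hasSum' hr hd).hasFPowerSeriesAt
  exact FormalMultilinearSeries.ofScalars_series_injective ℝ ℝ
    (h1.eq_formalMultilinearSeries h2)

private lemma euler_add' {Eu : ℝ → ℕ → ℝ} (hEu : IsEulerFamily Eu) (a b : ℝ) (i : ℕ) :
    Eu (a + b) i =
      ∑ k ∈ range (i + 1), (Nat.choose i k : ℝ) * Eu a (i - k) * b ^ k := by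
  have hcd : (fun n => Eu (a + b) n / (Nat.factorial n : ℝ)) =
      fun n => ∑ k ∈ range (n + 1),
        b ^ k / (Nat.factorial k : ℝ) * (Eu a (n - k) / (Nat.factorial (n - k) : ℝ)) := by
    apply coeff_unique' (F := fun z => 2 / (Real.exp z + 1) * Real.exp ((a + b) * z)) Real.pi_pos
    · intro z hz
      have h := hEu (a + b) z hz
      refine h.congr_fun fun n => ?_
      ring
    · intro z hz
      have hf := exp_hasSum' (b * z)
      have hg := hEu a z hz
      have hfs : Summable fun k => ‖(b * z) ^ k / (Nat.factorial k : ℝ)‖ := by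
        simpa only [Real.norm_eq_abs] using (summable_abs_iff.2 hf.summable)
      have hgs : Summable fun k => ‖Eu a k * z ^ k / (Nat.factorial k : ℝ)‖ := by
        simpa only [Real.norm_eq_abs] using (summable_abs_iff.2 hg.summable)
      have H := hasSum_sum_range_mul_of_summable_norm hfs hgs
      rw [hf.tsum_eq, hg.tsum_eq] at H
      have hval : Real.exp (b * z) * (2 / (Real.exp z + 1) * Real.exp (a * z)) =
          2 / (Real.exp z + 1) * Real.exp ((a + b) * z) := by
        rw [add_mul, Real.exp_add]; ring
      rw [hval] at H
      refine H.congr_fun fun m => ?_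
      rw [Finset.sum_mul]
      refine Finset.sum_congr rfl fun k hk => ?_
      have hk' : k ≤ m := Nat.lt_succ_iff.1 (Finset.mem_range.1 hk)
      rw [show z ^ m = z ^ k * z ^ (m - k) by rw [← pow_add, Nat.add_sub_cancel' hk'],
        mul_pow]
      ring
  have hi := congrFun hcd i
  have hfac : (Nat.factorial i : ℝ) ≠ 0 := Nat.cast_ne_zero.2 (Nat.factorial_ne_zero i)
  rw [div_eq_iff hfac] at hi
  rw [hi, Finset.sum_mul]
  refine Finset.sum_congr rfl fun k hk => ?_
  have hk' : k ≤ i := Nat.lt_succ_iff.1 (Finset.mem_range.1 hk)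
  have h1 : (Nat.factorial k : ℝ) ≠ 0 := Nat.cast_ne_zero.2 (Nat.factorial_ne_zero k)
  have h2 : (Nat.factorial (i - k) : ℝ) ≠ 0 := Nat.cast_ne_zero.2 (Nat.factorial_ne_zero _)
  rw [Nat.cast_choose ℝ hk']
  field_simp

theorem shifted_euler_matrix_vandermonde (Eu : ℝ → ℕ → ℝ) (hEu : IsEulerFamily Eu)
    (n : ℕ) (x : ℝ) :
    shiftedEulerMatrix Eu n x = eulerMatrix Eu n 0 * vandermondeMatrix n x := by
  ext i j
  rw [Matrix.mul_apply]
  simp only [shiftedEulerMatrix, eulerMatrix, vandermondeMatrix, Matrix.of_apply]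
  have key := euler_add' hEu 0 ((j : ℕ) + x) (i : ℕ)
  rw [zero_add] at key
  rw [key,
    Fin.sum_univ_eq_sum_range
      (fun k => (Nat.choose (i : ℕ) k : ℝ) * Eu 0 ((i : ℕ) - k) * ((j : ℕ) + x) ^ k)]
  apply Finset.sum_subset
  · intro k hk
    rw [Finset.mem_range] at hk ⊢
    have := i.isLt
    omega
  · intro k _ hk
    rw [Finset.mem_range] at hk
    rw [Nat.choose_eq_zero_of_lt (by omega)]
    simp
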